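/- The probability that the pattern HT first appears at exactly the i-th flip of a fair coin is (i-1)/2^i. -/

import Mathlib

/-- Extend a finite binary string (`true` = heads, `false` = tails) to an
infinite sequence by padding with `false`. -/
def padFalse {i : ℕ} (v : Fin i → Bool) : ℕ → Bool :=
  fun n => if h : n < i then v ⟨n, h⟩ else false

/-- The pattern `w` occurs in the flip sequence `s` (flip `m` is `s (m-1)`)
as a consecutive substring ending at flip `m`. -/
def OccursEndingAt (w : List Bool) (s : ℕ → Bool) (m : ℕ) : Prop :=
  w.length ≤ m ∧ ∀ j : Fin w.length, s (m - w.length + (j : ℕ)) = w.get j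

/-- The first occurrence of `w` in `s` ends exactly at flip `m`. -/
def FirstOccurEndsAt (w : List Bool) (s : ℕ → Bool) (m : ℕ) : Prop :=
  OccursEndingAt w s m ∧ ∀ k < m, ¬ OccursEndingAt w s k

/-- The number of binary strings of length `i` that end with `w` and contain
no other occurrence of `w` (`w`-first-timers of length `i`). -/
noncomputable def firstTimerCount (w : List Bool) (i : ℕ) : ℕ :=
  Nat.card {v : Fin i → Bool // FirstOccurEndsAt w (padFalse v) i}

/-- The probability that `w` first appears at exactly the `i`-th fair coin flip. -/
noncomputable def firstTimeProb (w : List Bool) (i : ℕ) : ℝ :=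
  (firstTimerCount w i : ℝ) / 2 ^ i

/-- The expected number of fair coin flips until `w` first appears. -/
noncomputable def expectedWaitTime (w : List Bool) : ℝ :=
  ∑' i : ℕ, (i : ℝ) * firstTimeProb w i

lemma occurs_iff (s : ℕ → Bool) (m : ℕ) :
    OccursEndingAt [true, false] s m ↔ 2 ≤ m ∧ s (m - 2) = true ∧ s (m - 1) = false := by
  constructor
  · rintro ⟨hm, h⟩
    simp only [List.length_cons, List.length_nil] at hm
    refine ⟨hm, ?_, ?_⟩
    · have := h ⟨0, by norm_num⟩
      simpa using this
    · have := h ⟨1, by norm_num⟩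
      simp only [List.get] at this
      rw [show m - [true, false].length + (1:ℕ) = m - 1 by simp; omega] at this
      simpa using this
  · rintro ⟨hm, h1, h2⟩
    refine ⟨by simpa using hm, ?_⟩
    intro j
    fin_cases j
    · simpa using h1
    · rw [show m - [true, false].length + (1:ℕ) = m - 1 by simp; omega]
      simpa using h2

lemma count_main (i : ℕ) (hi : 2 ≤ i) :
    firstTimerCount [true, false] i = i - 1 := by
  classical
  set P := fun v : Fin i → Bool => FirstOccurEndsAt [true, false] (padFalse v) i with hP
  have key : ∀ a : Fin (i-1), P (fun n => decide ((a:ℕ) ≤ n ∧ (n:ℕ) < i - 1)) := by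
    intro a
    have ha : (a : ℕ) < i - 1 := a.isLt
    have hpad : padFalse (fun n : Fin i => decide ((a:ℕ) ≤ n ∧ (n:ℕ) < i - 1))
        = fun n : ℕ => decide ((a:ℕ) ≤ n ∧ n < i - 1) := by
      funext n
      by_cases h : n < i
      · simp [padFalse, h]
      · simp [padFalse, h, decide_eq_false_iff_not]
        omega
    rw [hP]
    constructor
    · rw [occurs_iff, hpad]
      refine ⟨hi, ?_, ?_⟩
      · simp only [decide_eq_true_iff]; omega
      · simp only [decide_eq_false_iff_not]; omega
    · intro k hk hocc
      rw [occurs_iff, hpad] at hocc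
      obtain ⟨hk2, ht, hf⟩ := hocc
      simp only [decide_eq_true_iff, decide_eq_false_iff_not] at ht hf
      omega
  -- the map
  let f : Fin (i-1) → {v : Fin i → Bool // P v} :=
    fun a => ⟨fun n => decide ((a:ℕ) ≤ n ∧ (n:ℕ) < i - 1), key a⟩
  have hbij : Function.Bijective f := by
    constructor
    · intro a b hab
      have h := congrFun (congrArg Subtype.val hab)
      have ha := h ⟨a, by omega⟩
      have hb := h ⟨b, by omega⟩
      simp only [f, decide_eq_decide] at ha hb
      have : (b:ℕ) ≤ a := by
        by_contra hc
        have := ha.mp ⟨le_refl _, a.isLt⟩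
        omega
      have : (a:ℕ) ≤ b := by
        by_contra hc
        have := hb.mpr ⟨le_refl _, b.isLt⟩
        omega
      exact Fin.ext (by omega)
    · rintro ⟨v, hv⟩
      rw [hP] at hv
      obtain ⟨hocc, hfirst⟩ := hv
      rw [occurs_iff] at hocc
      obtain ⟨-, ht, hf⟩ := hocc
      have hmono : ∀ n, n < i - 2 → padFalse v n = true → padFalse v (n+1) = true := by
        intro n hn hvn
        by_contra hc
        exact hfirst (n+2) (by omega) ((occurs_iff _ _).mpr
          ⟨by omega, by simpa using hvn, by simpa [Bool.not_eq_true] using hc⟩)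
      have hex : ∃ n, padFalse v n = true := ⟨i - 2, ht⟩
      set a := Nat.find hex with hadef
      have haspec : padFalse v a = true := Nat.find_spec hex
      have hale : a ≤ i - 2 := Nat.find_le ht
      have hup : ∀ n, a ≤ n → n ≤ i - 2 → padFalse v n = true := by
        intro n hn
        induction n, hn using Nat.le_induction with
        | base => intro _; exact haspec
        | succ n hn ih =>
          intro hni
          exact hmono n (by omega) (ih (by omega))
      refine ⟨⟨a, by omega⟩, ?_⟩
      apply Subtype.ext
      funext n
      show decide ((a:ℕ) ≤ n ∧ (n:ℕ) < i - 1) = v n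
      have hvn : v n = padFalse v n := by simp [padFalse, n.isLt]
      rw [hvn]
      by_cases h1 : (n:ℕ) < a
      · have := Nat.find_min hex h1
        simp only [Bool.not_eq_true] at this
        rw [this]
        simp; omega
      · by_cases h2 : (n:ℕ) < i - 1
        · rw [hup n (by omega) (by omega)]
          simp; omega
        · have hn1 : (n:ℕ) = i - 1 := by have := n.isLt; omega
          rw [show (n:ℕ) = i - 1 from hn1, hf]
          simp
  rw [firstTimerCount]
  rw [← Nat.card_eq_of_bijective f hbij]
  simp
/-- The probability that the pattern HT first appears at exactly the `i`-th
flip of a fair coin is `(i - 1) / 2^i`. -/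
theorem firstTimeProb_HT (i : ℕ) (hi : 1 ≤ i) :
    firstTimeProb [true, false] i = ((i : ℝ) - 1) / 2 ^ i := by
  rcases eq_or_lt_of_le hi with h1 | h2
  · subst h1
    have hempty : IsEmpty {v : Fin 1 → Bool // FirstOccurEndsAt [true, false] (padFalse v) 1} := by
      constructor
      rintro ⟨v, ⟨hocc, -⟩⟩
      rw [occurs_iff] at hocc
      omega
    simp [firstTimeProb, firstTimerCount, Nat.card_of_isEmpty]
  · rw [firstTimeProb, count_main i h2]
    congr 1
    push_cast [Nat.cast_sub (by omega : 1 ≤ i)]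
    ring
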